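/- In the ILT model, the number of edges inside the neighbourhood of a node satisfies: e(x, t+1) = 3·e(x,t) + 2·deg_t(x) for a node x of G_t, and e(x', t+1) = e(x,t) + deg_t(x) for its clone x'. -/

import Mathlib

open SimpleGraph Finset

universe u
variable {V : Type u}

/-- One step of the Iterated Local Transitivity model: every vertex `x` gets a
clone `Sum.inr x` joined to `x` and all of its neighbours; old vertices are `Sum.inl`. -/
def ILTstep (G : SimpleGraph V) : SimpleGraph (V ⊕ V) where
  Adj a b := match a, b with
    | Sum.inl x, Sum.inl y => G.Adj x y
    | Sum.inl x, Sum.inr y => x = y ∨ G.Adj x y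
    | Sum.inr x, Sum.inl y => x = y ∨ G.Adj x y
    | Sum.inr _, Sum.inr _ => False
  symm := by
    constructor
    rintro (x | x) (y | y) h
    · exact G.adj_symm h
    · exact h.imp Eq.symm (fun hh => G.adj_symm hh)
    · exact h.imp Eq.symm (fun hh => G.adj_symm hh)
    · exact h.elim
  loopless := by
    constructor
    rintro (x | x) h
    · exact (G.ne_of_adj h) rfl
    · exact h

instance ILTstepDecAdj (G : SimpleGraph V) [DecidableEq V] [DecidableRel G.Adj] :
    DecidableRel (ILTstep G).Adj := fun a b =>
  match a, b with
  | Sum.inl x, Sum.inl y => inferInstanceAs (Decidable (G.Adj x y))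
  | Sum.inl x, Sum.inr y => inferInstanceAs (Decidable (x = y ∨ G.Adj x y))
  | Sum.inr x, Sum.inl y => inferInstanceAs (Decidable (x = y ∨ G.Adj x y))
  | Sum.inr _, Sum.inr _ => inferInstanceAs (Decidable False)

/-- The vertex set of the ILT model at time `t`. -/
def ILTV (V : Type u) : ℕ → Type u
  | 0 => V
  | t + 1 => ILTV V t ⊕ ILTV V t

/-- The graph of the ILT model at time `t`, starting from `G`. -/
def ILTG (G : SimpleGraph V) : (t : ℕ) → SimpleGraph (ILTV V t)
  | 0 => G
  | t + 1 => ILTstep (ILTG G t)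

instance ILTVFintype [Fintype V] : ∀ t, Fintype (ILTV V t)
  | 0 => inferInstanceAs (Fintype V)
  | t + 1 => letI := ILTVFintype t
             inferInstanceAs (Fintype (ILTV V t ⊕ ILTV V t))

instance ILTVDecEq [DecidableEq V] : ∀ t, DecidableEq (ILTV V t)
  | 0 => inferInstanceAs (DecidableEq V)
  | t + 1 => letI := ILTVDecEq t
             inferInstanceAs (DecidableEq (ILTV V t ⊕ ILTV V t))

instance ILTGDecAdj (G : SimpleGraph V) [DecidableEq V] [DecidableRel G.Adj] :
    ∀ t, DecidableRel (ILTG G t).Adj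
  | 0 => inferInstanceAs (DecidableRel G.Adj)
  | t + 1 => letI : DecidableEq (ILTV V t) := ILTVDecEq t
             letI : DecidableRel (ILTG G t).Adj := ILTGDecAdj G t
             ILTstepDecAdj (ILTG G t)

/-- The volume of a graph: the sum of the degrees of its vertices. -/
def graphVol [Fintype V] (G : SimpleGraph V) [DecidableRel G.Adj] : ℕ :=
  ∑ v, G.degree v

/-- The Wiener index: the sum of distances over unordered pairs of vertices. -/
noncomputable def wienerIndex [Fintype V] (G : SimpleGraph V) : ℕ :=
  (∑ x : V, ∑ y : V, G.dist x y) / 2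

/-- The number of edges of `G` with both endpoints in the neighbour set of `x`. -/
noncomputable def nbrEdges [Fintype V] (G : SimpleGraph V) (x : V) : ℕ :=
  {e ∈ G.edgeSet | ∀ v ∈ e, G.Adj x v}.ncard

/-- The graph on the common neighbourhood of `x`. -/
private def nbrGraph (G : SimpleGraph V) (x : V) : SimpleGraph V where
  Adj y z := G.Adj y z ∧ G.Adj x y ∧ G.Adj x z
  symm := by constructor; rintro y z ⟨h1, h2, h3⟩; exact ⟨h1.symm, h3, h2⟩
  loopless := by constructor; rintro y ⟨h1, _⟩; exact (G.ne_of_adj h1) rfl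

private lemma ILTstep_adj_ll (G : SimpleGraph V) (x y : V) :
    (ILTstep G).Adj (Sum.inl x) (Sum.inl y) ↔ G.Adj x y := Iff.rfl

private lemma ILTstep_adj_lr (G : SimpleGraph V) (x y : V) :
    (ILTstep G).Adj (Sum.inl x) (Sum.inr y) ↔ (x = y ∨ G.Adj x y) := Iff.rfl

private lemma ILTstep_adj_rl (G : SimpleGraph V) (x y : V) :
    (ILTstep G).Adj (Sum.inr x) (Sum.inl y) ↔ (x = y ∨ G.Adj x y) := Iff.rfl

private lemma ILTstep_adj_rr (G : SimpleGraph V) (x y : V) :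
    (ILTstep G).Adj (Sum.inr x) (Sum.inr y) ↔ False := Iff.rfl

private instance nbrGraphDecAdj (G : SimpleGraph V) [DecidableRel G.Adj] (x : V) :
    DecidableRel (nbrGraph G x).Adj := fun _ _ => instDecidableAnd

private lemma deg_eq_sum [Fintype V] (G : SimpleGraph V) [DecidableRel G.Adj] (x : V) :
    ∑ y : V, (if G.Adj x y then 1 else 0) = G.degree x := by
  rw [SimpleGraph.degree, neighborFinset_eq_filter, Finset.card_filter]

private lemma sum_indicator_eq [Fintype V] [DecidableEq V]
    (G : SimpleGraph V) [DecidableRel G.Adj] (x : V) :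
    ∑ y : V, ∑ z : V, (if G.Adj y z ∧ G.Adj x y ∧ G.Adj x z then 1 else 0)
      = 2 * nbrEdges G x := by
  have hset : {e ∈ G.edgeSet | ∀ v ∈ e, G.Adj x v} = (nbrGraph G x).edgeSet := by
    ext e
    induction e using Sym2.ind with
    | _ a b =>
      simp only [Set.mem_setOf_eq, mem_edgeSet, nbrGraph]
      constructor
      · rintro ⟨h, hv⟩
        exact ⟨h, hv a (Sym2.mem_mk_left a b), hv b (Sym2.mem_mk_right a b)⟩
      · rintro ⟨h, ha, hb⟩
        refine ⟨h, fun v hv => ?_⟩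
        rcases Sym2.mem_iff.1 hv with rfl | rfl <;> assumption
  have hcard : nbrEdges G x = (nbrGraph G x).edgeFinset.card := by
    rw [nbrEdges, hset, ← coe_edgeFinset, Set.ncard_coe_finset]
  rw [hcard, ← SimpleGraph.sum_degrees_eq_twice_card_edges]
  refine Finset.sum_congr rfl fun y _ => ?_
  rw [SimpleGraph.degree, neighborFinset_eq_filter, Finset.card_filter]
  rfl

private lemma sum_diag [Fintype V] [DecidableEq V]
    (G : SimpleGraph V) [DecidableRel G.Adj] (x : V) :
    ∑ y : V, ∑ z : V, (if y = z ∧ G.Adj x y then 1 else 0) = G.degree x := by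
  simp only [ite_and, Finset.sum_ite_eq, Finset.mem_univ, if_true]
  exact deg_eq_sum G x

private lemma sum_diag' [Fintype V] [DecidableEq V]
    (G : SimpleGraph V) [DecidableRel G.Adj] (x : V) :
    ∑ y : V, ∑ z : V, (if y = z ∧ G.Adj x z then 1 else 0) = G.degree x := by
  simp only [ite_and, Finset.sum_ite_eq, Finset.mem_univ, if_true]
  exact deg_eq_sum G x

private lemma sum_fix_z [Fintype V] [DecidableEq V]
    (G : SimpleGraph V) [DecidableRel G.Adj] (x : V) :
    ∑ y : V, ∑ z : V, (if x = z ∧ G.Adj x y then 1 else 0) = G.degree x := by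
  simp only [ite_and, Finset.sum_ite_eq, Finset.mem_univ, if_true]
  exact deg_eq_sum G x

private lemma sum_fix_y [Fintype V] [DecidableEq V]
    (G : SimpleGraph V) [DecidableRel G.Adj] (x : V) :
    ∑ y : V, ∑ z : V, (if x = y ∧ G.Adj x z then 1 else 0) = G.degree x := by
  rw [Finset.sum_comm]
  simp only [ite_and, Finset.sum_ite_eq, Finset.mem_univ, if_true]
  exact deg_eq_sum G x

private lemma ind_lr [DecidableEq V] (G : SimpleGraph V) [DecidableRel G.Adj]
    (x y z : V) :
    (if (y = z ∨ G.Adj y z) ∧ G.Adj x y ∧ (x = z ∨ G.Adj x z) then 1 else 0)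
      = (if G.Adj y z ∧ G.Adj x y ∧ G.Adj x z then 1 else 0)
        + (if y = z ∧ G.Adj x y then 1 else 0)
        + (if x = z ∧ G.Adj x y then 1 else 0) := by
  by_cases h1 : y = z <;> by_cases h2 : x = y <;> by_cases h3 : x = z <;>
    by_cases a1 : G.Adj y z <;> by_cases a2 : G.Adj x y <;> by_cases a3 : G.Adj x z <;>
    simp_all [SimpleGraph.adj_comm]

private lemma ind_rl [DecidableEq V] (G : SimpleGraph V) [DecidableRel G.Adj]
    (x y z : V) :
    (if (y = z ∨ G.Adj y z) ∧ (x = y ∨ G.Adj x y) ∧ G.Adj x z then 1 else 0)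
      = (if G.Adj y z ∧ G.Adj x y ∧ G.Adj x z then 1 else 0)
        + (if y = z ∧ G.Adj x z then 1 else 0)
        + (if x = y ∧ G.Adj x z then 1 else 0) := by
  by_cases h1 : y = z <;> by_cases h2 : x = y <;> by_cases h3 : x = z <;>
    by_cases a1 : G.Adj y z <;> by_cases a2 : G.Adj x y <;> by_cases a3 : G.Adj x z <;>
    simp_all [SimpleGraph.adj_comm]

private lemma ind_ll [DecidableEq V] (G : SimpleGraph V) [DecidableRel G.Adj]
    (x y z : V) :
    (if G.Adj y z ∧ (x = y ∨ G.Adj x y) ∧ (x = z ∨ G.Adj x z) then 1 else 0)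
      = (if G.Adj y z ∧ G.Adj x y ∧ G.Adj x z then 1 else 0)
        + (if x = y ∧ G.Adj x z then 1 else 0)
        + (if x = z ∧ G.Adj x y then 1 else 0) := by
  by_cases h1 : y = z <;> by_cases h2 : x = y <;> by_cases h3 : x = z <;>
    by_cases a1 : G.Adj y z <;> by_cases a2 : G.Adj x y <;> by_cases a3 : G.Adj x z <;>
    simp_all [SimpleGraph.adj_comm]

theorem ILT_nbrEdges_recurrence [Fintype V] [DecidableEq V]
    (G : SimpleGraph V) [DecidableRel G.Adj] (x : V) :
    nbrEdges (ILTstep G) (Sum.inl x) = 3 * nbrEdges G x + 2 * G.degree x ∧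
    nbrEdges (ILTstep G) (Sum.inr x) = nbrEdges G x + G.degree x := by
  have hS := sum_indicator_eq G x
  have h1 : 2 * nbrEdges (ILTstep G) (Sum.inl x)
      = 2 * (3 * nbrEdges G x + 2 * G.degree x) := by
    rw [← sum_indicator_eq (ILTstep G) (Sum.inl x)]
    simp only [Fintype.sum_sum_type, ILTstep_adj_ll, ILTstep_adj_lr, ILTstep_adj_rl,
      ILTstep_adj_rr, false_and, and_false, if_false,
      Finset.sum_const_zero, add_zero]
    simp only [ind_lr G x, ind_rl G x, Finset.sum_add_distrib]
    rw [sum_diag G x, sum_diag' G x, sum_fix_z G x, sum_fix_y G x, hS]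
    ring
  have h2 : 2 * nbrEdges (ILTstep G) (Sum.inr x)
      = 2 * (nbrEdges G x + G.degree x) := by
    rw [← sum_indicator_eq (ILTstep G) (Sum.inr x)]
    simp only [Fintype.sum_sum_type, ILTstep_adj_ll, ILTstep_adj_lr, ILTstep_adj_rl,
      ILTstep_adj_rr, false_and, and_false, if_false,
      Finset.sum_const_zero, add_zero]
    simp only [ind_ll G x, Finset.sum_add_distrib]
    rw [sum_fix_y G x, sum_fix_z G x, hS]
    ring
  exact ⟨by omega, by omega⟩
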